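/- Let F be a field and let O be a local subring of F whose fraction field is F (every element of F is a quotient of two elements of O). Then O is a valuation subring of F if and only if O is maximal under domination among local subrings of F with fraction field F; here a local subring O' of F dominates O if O ⊆ O' and the maximal ideal of O' contracts to the maximal ideal of O. -/
import Mathlib


/-- A local subring `O` of a field `F` whose fraction field is `F` is a valuation subring
of `F` if and only if it is maximal under domination among local subrings of `F` with
fraction field `F`: here `O'` dominates `O` if `O ⊆ O'` and the maximal ideal of `O'`
contracts to the maximal ideal of `O`. -/
theorem valuation_subring_iff_maximal_under_domination
    {F : Type*} [Field F] (O : Subring F) [IsLocalRing O]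
    (hfrac : ∀ x : F, ∃ a b : O, (b : F) ≠ 0 ∧ x = (a : F) / (b : F)) :
    (∀ x : F, x ≠ 0 → x ∈ O ∨ x⁻¹ ∈ O) ↔
      (∀ (O' : Subring F) [IsLocalRing O'],
        (∀ x : F, ∃ a b : O', (b : F) ≠ 0 ∧ x = (a : F) / (b : F)) →
        ∀ (h : O ≤ O'),
        (∀ (x : F) (hx : x ∈ O),
          ((⟨x, h hx⟩ : O') ∈ IsLocalRing.maximalIdeal O' ↔
            (⟨x, hx⟩ : O) ∈ IsLocalRing.maximalIdeal O)) →
        O' = O) := by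
  constructor
  · intro hval O' _ _ hle hdom
    let V : ValuationSubring F := ⟨O, fun x => by
      rcases eq_or_ne x 0 with rfl | hx
      · exact Or.inl (SetLike.mem_coe.mpr (zero_mem O))
      · exact hval x hx⟩
    have hlocal : IsLocalHom (Subring.inclusion hle) := by
      constructor
      rintro ⟨x, hx⟩ ha
      rw [← IsLocalRing.notMem_maximalIdeal] at ha ⊢
      exact fun h => ha ((hdom x hx).mpr h)
    have hle' : V.toLocalSubring ≤ LocalSubring.mk O' := ⟨hle, hlocal⟩
    exact le_antisymm (V.isMax_toLocalSubring hle').1 hle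
  · intro hmax x hx
    obtain ⟨B, hB⟩ := (LocalSubring.mk O).exists_le_valuationSubring
    haveI : IsLocalRing B.toSubring := B.toLocalSubring.isLocalRing
    have hfracB : ∀ y : F, ∃ a b : B.toSubring, (b : F) ≠ 0 ∧ y = (a : F) / (b : F) := by
      intro y
      by_cases hyB : y ∈ B
      · exact ⟨⟨y, hyB⟩, ⟨1, one_mem _⟩, one_ne_zero, by simp⟩
      · have hinv : y⁻¹ ∈ B := ((B.2 y).resolve_left hyB)
        have hy0 : y ≠ 0 := fun e => hyB (e ▸ zero_mem _)
        exact ⟨⟨1, one_mem _⟩, ⟨y⁻¹, hinv⟩, inv_ne_zero hy0, by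
          simp [one_div, inv_inv]⟩
    have hdom : ∀ (y : F) (hy : y ∈ O),
        ((⟨y, hB.1 hy⟩ : B.toSubring) ∈ IsLocalRing.maximalIdeal B.toSubring ↔
          (⟨y, hy⟩ : O) ∈ IsLocalRing.maximalIdeal O) := by
      intro y hy
      rw [IsLocalRing.mem_maximalIdeal, IsLocalRing.mem_maximalIdeal,
        mem_nonunits_iff, mem_nonunits_iff]
      constructor
      · intro hnB hu
        exact hnB (hu.map (Subring.inclusion hB.1))
      · intro hnO hu
        exact hnO (hB.2.1 (⟨y, hy⟩ : O) hu)
    have heq : B.toSubring = O := hmax B.toSubring hfracB hB.1 hdom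
    rcases B.2 x with h | h
    · exact Or.inl (heq ▸ h)
    · exact Or.inr (heq ▸ h)
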